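/- Let F be a field and a_1, …, a_k, b_1, …, b_k be 2k pairwise distinct elements of F. Let P be the k×k Cauchy matrix with entries p_{ij} = (a_i − b_j)⁻¹. Then P is invertible and, writing Q = P⁻¹ = [q_{ij}], the (j,i)-entry of Q is given by q_{ji} = (a_i − b_j) · (∏_{ℓ≠i} (b_j − a_ℓ) / ∏_{ℓ≠i} (a_i − a_ℓ)) · (∏_{ℓ≠j} (a_i − b_ℓ) / ∏_{ℓ≠j} (b_j − b_ℓ)), where the products over ℓ≠i (resp. ℓ≠j) range over ℓ ∈ {1,…,k}∖{i} (resp. {1,…,k}∖{j}). -/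
import Mathlib


open Matrix Finset Polynomial

/-- Evaluation of a Lagrange basis polynomial at an arbitrary point. -/
lemma eval_lagrange_basis {F : Type*} [Field F] {ι : Type*} [DecidableEq ι]
    (s : Finset ι) (v : ι → F) (j : ι) (x : F) :
    (Lagrange.basis s v j).eval x =
      (∏ ℓ ∈ s.erase j, (x - v ℓ)) / (∏ ℓ ∈ s.erase j, (v j - v ℓ)) := by
  rw [Lagrange.basis, Polynomial.eval_prod]
  rw [div_eq_mul_inv, ← Finset.prod_inv_distrib, ← Finset.prod_mul_distrib]
  refine Finset.prod_congr rfl fun ℓ _ => ?_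
  simp [Lagrange.basisDivisor, mul_comm]

/-- The key Lagrange interpolation sum identity. -/
lemma lagrange_sum {F : Type*} [Field F] {k : ℕ} (a b : Fin k → F)
    (hb : Function.Injective b) (i : Fin k) (x : F) :
    ∑ j : Fin k, (∏ ℓ ∈ univ.erase i, (b j - a ℓ)) *
      ((∏ ℓ ∈ univ.erase j, (x - b ℓ)) / (∏ ℓ ∈ univ.erase j, (b j - b ℓ)))
    = ∏ ℓ ∈ univ.erase i, (x - a ℓ) := by
  have hcard : #((univ : Finset (Fin k)).erase i) = k - 1 := by
    rw [Finset.card_erase_of_mem (mem_univ i), Finset.card_univ, Fintype.card_fin]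
  have hdeg : (Lagrange.nodal ((univ : Finset (Fin k)).erase i) a).degree
      < #(univ : Finset (Fin k)) := by
    rw [Lagrange.degree_nodal, hcard, Finset.card_univ, Fintype.card_fin]
    exact_mod_cast Nat.sub_lt i.pos one_pos
  have h := Lagrange.eq_interpolate (v := b)
      (f := Lagrange.nodal ((univ : Finset (Fin k)).erase i) a) hb.injOn hdeg
  have h2 := congrArg (Polynomial.eval x) h
  rw [Lagrange.eval_nodal, Lagrange.interpolate_apply, Polynomial.eval_finset_sum] at h2
  rw [h2]
  refine Finset.sum_congr rfl fun j _ => ?_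
  rw [Polynomial.eval_mul, Polynomial.eval_C, Lagrange.eval_nodal,
    eval_lagrange_basis]

/-- Entries of the inverse of a Cauchy matrix. -/
theorem cauchy_matrix_inverse_entries
    {F : Type*} [Field F] {k : ℕ} (a b : Fin k → F)
    (hdist : Function.Injective (Sum.elim a b : Fin k ⊕ Fin k → F)) :
    IsUnit (Matrix.of fun i j => (a i - b j)⁻¹ : Matrix (Fin k) (Fin k) F).det ∧
    ∀ i j : Fin k,
      (Matrix.of fun i j => (a i - b j)⁻¹ : Matrix (Fin k) (Fin k) F)⁻¹ j i =
        (a i - b j) *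
          ((∏ ℓ ∈ univ.erase i, (b j - a ℓ)) / (∏ ℓ ∈ univ.erase i, (a i - a ℓ))) *
          ((∏ ℓ ∈ univ.erase j, (a i - b ℓ)) / (∏ ℓ ∈ univ.erase j, (b j - b ℓ))) := by
  -- basic distinctness facts
  have ha : Function.Injective a := fun x y h => by
    simpa using hdist (a₁ := Sum.inl x) (a₂ := Sum.inl y) (by simpa using h)
  have hb : Function.Injective b := fun x y h => by
    simpa using hdist (a₁ := Sum.inr x) (a₂ := Sum.inr y) (by simpa using h)
  have hab : ∀ i j : Fin k, a i - b j ≠ 0 := by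
    intro i j h
    have : (Sum.inl i : Fin k ⊕ Fin k) = Sum.inr j := hdist (by simpa [sub_eq_zero] using h)
    simp at this
  set P : Matrix (Fin k) (Fin k) F := Matrix.of fun i j => (a i - b j)⁻¹ with hP
  set Q : Matrix (Fin k) (Fin k) F := Matrix.of fun j i =>
      (a i - b j) *
        ((∏ ℓ ∈ univ.erase i, (b j - a ℓ)) / (∏ ℓ ∈ univ.erase i, (a i - a ℓ))) *
        ((∏ ℓ ∈ univ.erase j, (a i - b ℓ)) / (∏ ℓ ∈ univ.erase j, (b j - b ℓ))) with hQ
  have hPQ : P * Q = 1 := by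
    ext i m
    rw [Matrix.mul_apply, Matrix.one_apply]
    have hden : (∏ ℓ ∈ univ.erase m, (a m - a ℓ)) ≠ 0 := by
      refine Finset.prod_ne_zero_iff.mpr fun ℓ hℓ => ?_
      have : ℓ ≠ m := (Finset.mem_erase.mp hℓ).1
      exact sub_ne_zero.mpr fun h => this (ha h.symm)
    have key : ∀ j : Fin k, P i j * Q j m =
        (∏ ℓ ∈ univ.erase i, (b j - a ℓ)) *
          ((∏ ℓ ∈ univ.erase j, (a m - b ℓ)) / (∏ ℓ ∈ univ.erase j, (b j - b ℓ))) /
          (∏ ℓ ∈ univ.erase m, (a m - a ℓ)) := by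
      intro j
      have habij := hab i j
      have step : (a m - b j) * ∏ ℓ ∈ univ.erase m, (b j - a ℓ) =
          (a i - b j) * ∏ ℓ ∈ univ.erase i, (b j - a ℓ) := by
        have h1 : (b j - a m) * ∏ ℓ ∈ univ.erase m, (b j - a ℓ) =
            ∏ ℓ : Fin k, (b j - a ℓ) :=
          Finset.mul_prod_erase univ (fun ℓ => b j - a ℓ) (mem_univ m)
        have h2 : (b j - a i) * ∏ ℓ ∈ univ.erase i, (b j - a ℓ) =
            ∏ ℓ : Fin k, (b j - a ℓ) :=
          Finset.mul_prod_erase univ (fun ℓ => b j - a ℓ) (mem_univ i)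
        have := h1.trans h2.symm
        linear_combination -this
      show (a i - b j)⁻¹ *
          ((a m - b j) *
            ((∏ ℓ ∈ univ.erase m, (b j - a ℓ)) / (∏ ℓ ∈ univ.erase m, (a m - a ℓ))) *
            ((∏ ℓ ∈ univ.erase j, (a m - b ℓ)) / (∏ ℓ ∈ univ.erase j, (b j - b ℓ)))) = _
      calc (a i - b j)⁻¹ *
          ((a m - b j) *
            ((∏ ℓ ∈ univ.erase m, (b j - a ℓ)) / (∏ ℓ ∈ univ.erase m, (a m - a ℓ))) *
            ((∏ ℓ ∈ univ.erase j, (a m - b ℓ)) / (∏ ℓ ∈ univ.erase j, (b j - b ℓ))))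
          = (a i - b j)⁻¹ * ((a m - b j) * ∏ ℓ ∈ univ.erase m, (b j - a ℓ)) *
            (((∏ ℓ ∈ univ.erase j, (a m - b ℓ)) / (∏ ℓ ∈ univ.erase j, (b j - b ℓ))) /
              (∏ ℓ ∈ univ.erase m, (a m - a ℓ))) := by ring
        _ = (a i - b j)⁻¹ * ((a i - b j) * ∏ ℓ ∈ univ.erase i, (b j - a ℓ)) *
            (((∏ ℓ ∈ univ.erase j, (a m - b ℓ)) / (∏ ℓ ∈ univ.erase j, (b j - b ℓ))) /
              (∏ ℓ ∈ univ.erase m, (a m - a ℓ))) := by rw [step]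
        _ = _ := by rw [inv_mul_cancel_left₀ habij]; ring
    rw [Finset.sum_congr rfl fun j _ => key j, ← Finset.sum_div, lagrange_sum a b hb i (a m)]
    by_cases him : i = m
    · subst him
      simp [div_self hden]
    · have : (∏ ℓ ∈ univ.erase i, (a m - a ℓ)) = 0 := by
        refine Finset.prod_eq_zero (Finset.mem_erase.mpr ⟨Ne.symm him, mem_univ m⟩) ?_
        simp
      simp [this, him]
  refine ⟨Matrix.isUnit_det_of_right_inverse hPQ, fun i j => ?_⟩
  rw [Matrix.inv_eq_right_inv hPQ]
  rfl
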